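/- Let ℓ ≥ 2 be an integer, let U be a finite type, let (Ω, Pr) be a probability space, and let H : Ω → (U → Fin 2^ℓ) be a random hash function that is uniform and pairwise independent: for every x ∈ U and value a, Pr[H(x) = a] = 2^{-ℓ}, and for all distinct x, y ∈ U and values a, b, Pr[H(x) = a and H(y) = b] = 2^{-2ℓ}. Let W ⊆ U with 0 < |W| < 2^{ℓ-1}. Then, with j = ℓ − ⌈log₂ |W|⌉ − 1, the probability that exactly one w ∈ W satisfies H(w) < 2^j is at least 1/16. -/

import Mathlib

open MeasureTheory ProbabilityTheory Finset
open scoped ProbabilityTheory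

lemma nms_of_add_compl_le {Ω : Type*} [MeasureSpace Ω]
    [IsProbabilityMeasure (ℙ : Measure Ω)] (s : Set Ω)
    (h : ℙ s + ℙ sᶜ ≤ 1) : NullMeasurableSet s (ℙ : Measure Ω) := by
  set T := toMeasurable (ℙ : Measure Ω) s with hTdef
  set T' := toMeasurable (ℙ : Measure Ω) sᶜ with hT'def
  have hT : MeasurableSet T := measurableSet_toMeasurable _ _
  have hT' : MeasurableSet T' := measurableSet_toMeasurable _ _
  have hsT : s ⊆ T := subset_toMeasurable _ _
  have hsT' : sᶜ ⊆ T' := subset_toMeasurable _ _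
  have hUnion : T ∪ T' = Set.univ := by
    apply Set.eq_univ_of_univ_subset
    intro ω _
    by_cases hω : ω ∈ s
    · exact Or.inl (hsT hω)
    · exact Or.inr (hsT' hω)
  have hIE : ℙ (T ∪ T') + ℙ (T ∩ T') = ℙ T + ℙ T' := measure_union_add_inter T hT'
  rw [hUnion, measure_univ, measure_toMeasurable, measure_toMeasurable] at hIE
  have hnull : ℙ (T ∩ T') = 0 := by
    have h1 : (1 : ENNReal) + ℙ (T ∩ T') ≤ 1 + 0 := by
      rw [add_zero]; rw [hIE]; exact h
    have := (ENNReal.add_le_add_iff_left (by simp : (1:ENNReal) ≠ ⊤)).1 h1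
    exact le_antisymm this (by simp)
  refine ⟨T, hT, ?_⟩
  rw [MeasureTheory.ae_eq_set]
  constructor
  · exact measure_mono_null (fun ω hω => (hω.2 (hsT hω.1)).elim) hnull
  · refine measure_mono_null (fun ω hω => ?_) hnull
    exact ⟨hω.1, hsT' hω.2⟩

lemma partition_nms {Ω ι : Type*} [DecidableEq ι] [MeasureSpace Ω] [IsProbabilityMeasure (ℙ : Measure Ω)]
    [Fintype ι] (f : ι → Set Ω) (v : ENNReal)
    (hmeas : ∀ i, ℙ (f i) = v) (hcard : (Fintype.card ι : ENNReal) * v = 1)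
    (hcover : ∀ ω, ∃ i, ω ∈ f i) (i : ι) : NullMeasurableSet (f i) (ℙ : Measure Ω) := by
  apply nms_of_add_compl_le
  have hcompl : (f i)ᶜ ⊆ ⋃ b ∈ univ.erase i, f b := by
    intro ω hω
    obtain ⟨i', hi'⟩ := hcover ω
    have hne : i' ≠ i := fun h => hω (h ▸ hi')
    exact Set.mem_biUnion (Finset.mem_erase.2 ⟨hne, Finset.mem_univ _⟩) hi'
  have h2 : ℙ ((f i)ᶜ) ≤ ∑ b ∈ univ.erase i, ℙ (f b) :=
    (measure_mono hcompl).trans (measure_biUnion_finset_le _ _)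
  have h3 : ∑ b ∈ univ.erase i, ℙ (f b) = ((Fintype.card ι - 1 : ℕ) : ENNReal) * v := by
    rw [Finset.sum_congr rfl fun b _ => hmeas b, Finset.sum_const,
      Finset.card_erase_of_mem (Finset.mem_univ i), Finset.card_univ, nsmul_eq_mul]
  have hpos : 1 ≤ Fintype.card ι := Fintype.card_pos_iff.2 ⟨i⟩
  calc ℙ (f i) + ℙ ((f i)ᶜ) ≤ v + ((Fintype.card ι - 1 : ℕ) : ENNReal) * v :=
        add_le_add (le_of_eq (hmeas i)) (h2.trans h3.le)
  _ = (((Fintype.card ι - 1 : ℕ) : ENNReal) + 1) * v := by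
        rw [add_one_mul, add_comm]
  _ = (Fintype.card ι : ENNReal) * v := by
        congr 1
        have h4 : (Fintype.card ι - 1 + 1 : ℕ) = Fintype.card ι := by omega
        exact_mod_cast congrArg (Nat.cast : ℕ → ENNReal) h4
  _ = 1 := hcard

lemma ennreal_numeric (k c : ℕ) (hk : 1 ≤ k) (hk2 : k ≤ 2 ^ c) (h2k : 2 ^ c ≤ 2 * k) :
    (1 : ENNReal) / 16 ≤
      (k : ENNReal) * (((2 : ENNReal) ^ (c+1))⁻¹ - (k - 1 : ℕ) * (((2:ENNReal) ^ (c+1))⁻¹)^2) := by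
  set q : ENNReal := ((2:ENNReal) ^ (c+1))⁻¹ with hq
  have hqtop : q ≠ ⊤ := by simp [hq]
  have hkq_le : (k : ENNReal) * q ≤ 2⁻¹ := by
    have h1 : (k : ENNReal) ≤ 2 ^ c := by exact_mod_cast Nat.cast_le.2 hk2
    calc (k : ENNReal) * q ≤ (2:ENNReal)^c * q := mul_le_mul_left h1 q
    _ = 2⁻¹ := by
        rw [hq, pow_succ, ENNReal.mul_inv (by simp) (by norm_num), ← mul_assoc,
          ENNReal.mul_inv_cancel (by simp) (by simp), one_mul]
  have hkq_ge : (4 : ENNReal)⁻¹ ≤ (k : ENNReal) * q := by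
    have h1 : ((2:ENNReal) ^ (c+1)) ≤ (4 : ENNReal) * k := by
      have h2 : (2:ℕ) ^ (c+1) ≤ 4 * k := by rw [pow_succ]; omega
      calc ((2:ENNReal) ^ (c+1)) = ((2^(c+1) : ℕ) : ENNReal) := by push_cast; ring
      _ ≤ ((4 * k : ℕ) : ENNReal) := Nat.cast_le.2 h2
      _ = (4 : ENNReal) * k := by push_cast; ring
    have h2 : ((4 : ENNReal) * k)⁻¹ ≤ q := ENNReal.inv_le_inv.2 h1
    calc (4 : ENNReal)⁻¹ = (k : ENNReal) * ((4 : ENNReal) * k)⁻¹ := by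
          rw [ENNReal.mul_inv (by norm_num) (by simp), ← mul_assoc, mul_comm (k:ENNReal), mul_assoc,
            ENNReal.mul_inv_cancel (by exact_mod_cast Nat.cast_ne_zero.2 (by omega)) (by simp), mul_one]
    _ ≤ (k : ENNReal) * q := mul_le_mul_right h2 _
  have hsub : q * 2⁻¹ ≤ q - (k - 1 : ℕ) * q ^ 2 := by
    have h1 : ((k - 1 : ℕ) : ENNReal) * q ^ 2 ≤ q * 2⁻¹ := by
      calc ((k - 1 : ℕ) : ENNReal) * q ^ 2 ≤ (k : ENNReal) * q ^ 2 :=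
            mul_le_mul_left (by exact_mod_cast Nat.cast_le.2 (Nat.sub_le k 1)) _
      _ = ((k : ENNReal) * q) * q := by ring
      _ ≤ 2⁻¹ * q := mul_le_mul_left hkq_le q
      _ = q * 2⁻¹ := mul_comm _ _
    have h3 : q - q * 2⁻¹ = q * 2⁻¹ := by
      have := ENNReal.sub_half hqtop
      rwa [ENNReal.div_eq_inv_mul, mul_comm] at this
    calc q * 2⁻¹ = q - q * 2⁻¹ := h3.symm
    _ ≤ q - (k - 1 : ℕ) * q ^ 2 := tsub_le_tsub_left h1 q
  calc (1 : ENNReal) / 16 ≤ 4⁻¹ * 2⁻¹ := by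
        rw [← ENNReal.mul_inv (by norm_num) (by norm_num), ENNReal.div_eq_inv_mul, mul_one]
        exact ENNReal.inv_le_inv.2 (by norm_num)
  _ ≤ ((k : ENNReal) * q) * 2⁻¹ := mul_le_mul_left hkq_ge _
  _ = (k : ENNReal) * (q * 2⁻¹) := mul_assoc _ _ _
  _ ≤ (k : ENNReal) * (q - (k - 1 : ℕ) * q ^ 2) := mul_le_mul_right hsub _

theorem stmt6 {Ω : Type*} [MeasureSpace Ω] [IsProbabilityMeasure (ℙ : Measure Ω)]
    {U : Type*} [Fintype U] (ℓ : ℕ) (hℓ : 2 ≤ ℓ)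
    (H : Ω → U → Fin (2 ^ ℓ))
    (huniform : ∀ (x : U) (a : Fin (2 ^ ℓ)),
      ℙ {ω | H ω x = a} = (2 ^ ℓ : ENNReal)⁻¹)
    (hpair : ∀ (x y : U), x ≠ y → ∀ (a b : Fin (2 ^ ℓ)),
      ℙ {ω | H ω x = a ∧ H ω y = b} = (2 ^ ℓ : ENNReal)⁻¹ * (2 ^ ℓ : ENNReal)⁻¹)
    (W : Finset U) (hW0 : 0 < W.card) (hW1 : W.card < 2 ^ (ℓ - 1)) :
    (1 : ENNReal) / 16 ≤
      ℙ {ω | ∃! w, w ∈ W ∧ ((H ω w : ℕ) < 2 ^ (ℓ - Nat.clog 2 W.card - 1))} := by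
  classical
  set k := W.card with hkdef
  set c := Nat.clog 2 k with hcdef
  set j := ℓ - c - 1 with hjdef
  -- arithmetic facts
  have hc_le : c + 1 ≤ ℓ := by
    have h1 : c ≤ ℓ - 1 := (Nat.clog_le_iff_le_pow one_lt_two).2 (le_of_lt hW1)
    omega
  have hjc : j + (c + 1) = ℓ := by omega
  have hk2c : k ≤ 2 ^ c := Nat.le_pow_clog one_lt_two k
  have h2ck : 2 ^ c ≤ 2 * k := by
    rcases eq_or_lt_of_le (Nat.succ_le_of_lt hW0) with h | h
    · have hk1 : k = 1 := h.symm ▸ rfl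
      rw [hk1] at hcdef ⊢
      rw [hcdef]
      simp [Nat.clog_one_right]
    · have hlt : 2 ^ (c - 1) < k := by
        have := Nat.pow_pred_clog_lt_self (one_lt_two) h
        simpa [hcdef] using this
      have hc1 : 0 < c := Nat.clog_pos one_lt_two h
      have h2 : 2 ^ c = 2 * 2 ^ (c - 1) := by
        conv_lhs => rw [show c = (c - 1) + 1 by omega]
        rw [pow_succ]; ring
      omega
  have hpow_le : (2:ℕ) ^ j ≤ 2 ^ ℓ := Nat.pow_le_pow_right (by norm_num) (by omega)
  -- notation
  set inv : ENNReal := (2 ^ ℓ : ENNReal)⁻¹ with hinvdef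
  set p : ENNReal := (2 ^ j : ENNReal) * inv with hpdef
  have hp_eq : p = ((2:ENNReal) ^ (c+1))⁻¹ := by
    rw [hpdef, hinvdef, ← hjc, pow_add, ENNReal.mul_inv (by simp) (by norm_num), ← mul_assoc,
      ENNReal.mul_inv_cancel (by simp) (by simp), one_mul]
  -- null measurability of elementary events
  have hS_nm : ∀ (x : U) (a : Fin (2 ^ ℓ)), NullMeasurableSet {ω | H ω x = a} (ℙ : Measure Ω) := by
    intro x a
    refine partition_nms (fun a => {ω | H ω x = a}) inv (fun a => huniform x a) ?_ (fun ω => ⟨H ω x, rfl⟩) a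
    rw [Fintype.card_fin, hinvdef]
    push_cast
    exact ENNReal.mul_inv_cancel (by positivity) (by simp)
  have hP_nm : ∀ (x y : U), x ≠ y → ∀ (q : Fin (2 ^ ℓ) × Fin (2 ^ ℓ)),
      NullMeasurableSet {ω | H ω x = q.1 ∧ H ω y = q.2} (ℙ : Measure Ω) := by
    intro x y hxy q
    refine partition_nms (fun q : Fin (2^ℓ) × Fin (2^ℓ) => {ω | H ω x = q.1 ∧ H ω y = q.2})
      (inv * inv) (fun q => hpair x y hxy q.1 q.2) ?_ (fun ω => ⟨(H ω x, H ω y), rfl, rfl⟩) q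
    rw [Fintype.card_prod, Fintype.card_fin, hinvdef]
    push_cast
    rw [show ((2:ENNReal)^ℓ * 2^ℓ) * ((2^ℓ)⁻¹ * (2^ℓ)⁻¹) = ((2:ENNReal)^ℓ * (2^ℓ)⁻¹) * (2^ℓ * (2^ℓ)⁻¹) by ring,
      ENNReal.mul_inv_cancel (by positivity) (by simp), one_mul]
  
  -- the basic events
  set A : U → Set Ω := fun x => {ω | (H ω x : ℕ) < 2 ^ j} with hAdef
  set F : Finset (Fin (2 ^ ℓ)) := univ.filter (fun a => (a : ℕ) < 2 ^ j) with hFdef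
  have hFcard : F.card = 2 ^ j := by
    have hbij : F.card = (Finset.range (2 ^ j)).card := by
      refine Finset.card_bij (fun a _ => (a : ℕ)) ?_ ?_ ?_
      · intro a ha
        simp only [hFdef, Finset.mem_filter] at ha
        exact Finset.mem_range.2 ha.2
      · intro a ha b hb hab
        exact Fin.val_injective hab
      · intro i hi
        have hi' : i < 2 ^ j := Finset.mem_range.1 hi
        exact ⟨⟨i, lt_of_lt_of_le hi' hpow_le⟩,
          by simp only [hFdef, Finset.mem_filter]; exact ⟨Finset.mem_univ _, hi'⟩, rfl⟩
    rw [hbij, Finset.card_range]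
  have hAeq : ∀ x, A x = ⋃ a ∈ F, {ω | H ω x = a} := by
    intro x
    ext ω
    simp only [hAdef, hFdef, Set.mem_setOf_eq, Set.mem_iUnion, Finset.mem_filter,
      Finset.mem_univ, true_and]
    constructor
    · intro h
      exact ⟨H ω x, h, rfl⟩
    · rintro ⟨a, ha, rfl⟩
      exact ha
  have hA_nm : ∀ x, NullMeasurableSet (A x) (ℙ : Measure Ω) := by
    intro x
    rw [hAeq x]
    exact NullMeasurableSet.biUnion F.countable_toSet (fun b _ => hS_nm x b)
  have hA_meas : ∀ x, ℙ (A x) = p := by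
    intro x
    rw [hAeq x]
    rw [measure_biUnion_finset₀ ?disj (fun b _ => hS_nm x b)]
    case disj =>
      intro a _ b _ hab
      apply Disjoint.aedisjoint
      rw [Set.disjoint_left]
      intro ω h1 h2
      exact hab (h1.symm.trans h2)
    rw [Finset.sum_congr rfl (fun b _ => huniform x b), Finset.sum_const, hFcard,
      nsmul_eq_mul, hpdef, hinvdef]
    push_cast
    ring
  have hAA_meas : ∀ x y, x ≠ y → ℙ (A x ∩ A y) = p * p := by
    intro x y hxy
    have hEq : A x ∩ A y = ⋃ q ∈ F ×ˢ F, {ω | H ω x = q.1 ∧ H ω y = q.2} := by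
      ext ω
      simp only [hAdef, hFdef, Set.mem_inter_iff, Set.mem_setOf_eq, Set.mem_iUnion,
        Finset.mem_product, Finset.mem_filter, Finset.mem_univ, true_and]
      constructor
      · rintro ⟨h1, h2⟩
        exact ⟨(H ω x, H ω y), ⟨h1, h2⟩, rfl, rfl⟩
      · rintro ⟨⟨a, b⟩, ⟨ha, hb⟩, rfl, rfl⟩
        exact ⟨ha, hb⟩
    rw [hEq]
    rw [measure_biUnion_finset₀ ?disj2 (fun q _ => hP_nm x y hxy q)]
    case disj2 =>
      intro q1 _ q2 _ hq
      apply Disjoint.aedisjoint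
      rw [Set.disjoint_left]
      rintro ω ⟨h1, h2⟩ ⟨h3, h4⟩
      exact hq (Prod.ext (h1.symm.trans h3) (h2.symm.trans h4))
    rw [Finset.sum_congr rfl (fun q _ => hpair x y hxy q.1 q.2), Finset.sum_const,
      Finset.card_product, hFcard, nsmul_eq_mul, hpdef, hinvdef]
    push_cast
    ring
  -- the disjoint "exactly w" events
  set B : U → Set Ω := fun w => A w \ ⋃ w' ∈ W.erase w, A w' with hBdef
  have hB_nm : ∀ w, NullMeasurableSet (B w) (ℙ : Measure Ω) := by
    intro w
    exact (hA_nm w).diff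
      (NullMeasurableSet.biUnion (W.erase w).countable_toSet (fun b _ => hA_nm b))
  have hB_disj : (W : Set U).Pairwise (Function.onFun (MeasureTheory.AEDisjoint ℙ) B) := by
    intro w hw v hv hwv
    apply Disjoint.aedisjoint
    rw [Set.disjoint_left]
    rintro ω ⟨hw1, _⟩ ⟨_, hv2⟩
    exact hv2 (Set.mem_biUnion (Finset.mem_erase.2 ⟨hwv, hw⟩) hw1)
  have hsum : ℙ (⋃ w ∈ W, B w) = ∑ w ∈ W, ℙ (B w) :=
    measure_biUnion_finset₀ hB_disj (fun w _ => hB_nm w)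
  have hsubset : (⋃ w ∈ W, B w) ⊆ {ω | ∃! w, w ∈ W ∧ ((H ω w : ℕ) < 2 ^ j)} := by
    intro ω hω
    obtain ⟨w, hw, hw1, hw2⟩ := Set.mem_iUnion₂.1 hω
    refine ⟨w, ⟨hw, hw1⟩, ?_⟩
    rintro y ⟨hyW, hyA⟩
    by_contra hne
    exact hw2 (Set.mem_biUnion (Finset.mem_erase.2 ⟨hne, hyW⟩) hyA)
  have hB_lb : ∀ w ∈ W, p - ((k - 1 : ℕ) : ENNReal) * p ^ 2 ≤ ℙ (B w) := by
    intro w hw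
    have hC_le : ℙ (A w ∩ ⋃ w' ∈ W.erase w, A w') ≤ ((k - 1 : ℕ) : ENNReal) * p ^ 2 := by
      have h1 : A w ∩ ⋃ w' ∈ W.erase w, A w' ⊆ ⋃ w' ∈ W.erase w, (A w ∩ A w') := by
        rintro ω ⟨h1, h2⟩
        obtain ⟨w', hw', hmem⟩ := Set.mem_iUnion₂.1 h2
        exact Set.mem_iUnion₂.2 ⟨w', hw', h1, hmem⟩
      calc ℙ (A w ∩ ⋃ w' ∈ W.erase w, A w') ≤ ∑ w' ∈ W.erase w, ℙ (A w ∩ A w') :=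
            (measure_mono h1).trans (measure_biUnion_finset_le _ _)
      _ = ((k - 1 : ℕ) : ENNReal) * p ^ 2 := by
          rw [Finset.sum_congr rfl (fun w' hw' =>
            hAA_meas w w' (Ne.symm (Finset.mem_erase.1 hw').1)), Finset.sum_const,
            Finset.card_erase_of_mem hw, nsmul_eq_mul, sq]
    have h2 : ℙ (A w) ≤ ℙ (B w) + ℙ (A w ∩ ⋃ w' ∈ W.erase w, A w') := by
      have hsub2 : A w ⊆ B w ∪ (A w ∩ ⋃ w' ∈ W.erase w, A w') := by
        intro ω hω
        by_cases hmem : ω ∈ ⋃ w' ∈ W.erase w, A w'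
        · exact Or.inr ⟨hω, hmem⟩
        · exact Or.inl ⟨hω, hmem⟩
      exact (measure_mono hsub2).trans (measure_union_le _ _)
    rw [tsub_le_iff_right]
    calc p = ℙ (A w) := (hA_meas w).symm
    _ ≤ ℙ (B w) + ℙ (A w ∩ ⋃ w' ∈ W.erase w, A w') := h2
    _ ≤ ℙ (B w) + ((k - 1 : ℕ) : ENNReal) * p ^ 2 := add_le_add_right hC_le _
  calc (1 : ENNReal) / 16
      ≤ (k : ENNReal) * (((2:ENNReal) ^ (c+1))⁻¹ - (k - 1 : ℕ) * (((2:ENNReal) ^ (c+1))⁻¹)^2) :=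
        ennreal_numeric k c hW0 hk2c h2ck
  _ = (k : ENNReal) * (p - ((k - 1 : ℕ) : ENNReal) * p ^ 2) := by rw [hp_eq]
  _ = ∑ _w ∈ W, (p - ((k - 1 : ℕ) : ENNReal) * p ^ 2) := by
        rw [Finset.sum_const, nsmul_eq_mul]
  _ ≤ ∑ w ∈ W, ℙ (B w) := Finset.sum_le_sum hB_lb
  _ = ℙ (⋃ w ∈ W, B w) := hsum.symm
  _ ≤ ℙ {ω | ∃! w, w ∈ W ∧ ((H ω w : ℕ) < 2 ^ j)} := measure_mono hsubset
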